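/- Let I ⊆ ℝ be an open interval and let u : ℝ → ℝ be three times differentiable on I with 2·u′(x)·u‴(x) − 3·u″(x)² − 2·u(x)·u′(x)⁴ = 0 for all x ∈ I. Let Ψ₁, Ψ₂ : ℝ → ℝ be twice differentiable with Ψᵢ″(y) = (1/2)·y·Ψᵢ(y) for all y ∈ ℝ (i = 1,2), and assume Ψ₁(u(x)) ≠ 0 for all x ∈ I. Then the function z(x) := Ψ₂(u(x))/Ψ₁(u(x)) is three times differentiable on I and satisfies 2·z′(x)·z‴(x) = 3·z″(x)² for all x ∈ I. (The point transformation z = Ψ₂(u)/Ψ₁(u) maps equation (6.1) into the equation z₃ = 3z₂²/(2z₁), as claimed in Remark 2 of Section 6 of the paper.) -/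

import Mathlib

/-- The point transformation `z = Ψ₂(u)/Ψ₁(u)` maps (6.1) into `z₃ = 3 z₂²/(2 z₁)`. -/
theorem point_transformation_exampleI (a b : ℝ) (u Ψ₁ Ψ₂ : ℝ → ℝ)
    (hu1 : ∀ x ∈ Set.Ioo a b, DifferentiableAt ℝ u x)
    (hu2 : ∀ x ∈ Set.Ioo a b, DifferentiableAt ℝ (deriv u) x)
    (hu3 : ∀ x ∈ Set.Ioo a b, DifferentiableAt ℝ (deriv (deriv u)) x)
    (hode : ∀ x ∈ Set.Ioo a b,
      2 * deriv u x * deriv (deriv (deriv u)) x - 3 * (deriv (deriv u) x) ^ 2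
        - 2 * u x * (deriv u x) ^ 4 = 0)
    (hΨ₁1 : ∀ y : ℝ, DifferentiableAt ℝ Ψ₁ y)
    (hΨ₁2 : ∀ y : ℝ, DifferentiableAt ℝ (deriv Ψ₁) y)
    (hairy₁ : ∀ y : ℝ, deriv (deriv Ψ₁) y = (1 / 2) * y * Ψ₁ y)
    (hΨ₂1 : ∀ y : ℝ, DifferentiableAt ℝ Ψ₂ y)
    (hΨ₂2 : ∀ y : ℝ, DifferentiableAt ℝ (deriv Ψ₂) y)
    (hairy₂ : ∀ y : ℝ, deriv (deriv Ψ₂) y = (1 / 2) * y * Ψ₂ y)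
    (hne : ∀ x ∈ Set.Ioo a b, Ψ₁ (u x) ≠ 0) :
    (∀ x ∈ Set.Ioo a b,
      DifferentiableAt ℝ (fun x => Ψ₂ (u x) / Ψ₁ (u x)) x) ∧
    (∀ x ∈ Set.Ioo a b,
      DifferentiableAt ℝ (deriv (fun x => Ψ₂ (u x) / Ψ₁ (u x))) x) ∧
    (∀ x ∈ Set.Ioo a b,
      DifferentiableAt ℝ (deriv (deriv (fun x => Ψ₂ (u x) / Ψ₁ (u x)))) x) ∧
    (∀ x ∈ Set.Ioo a b,
      2 * deriv (fun x => Ψ₂ (u x) / Ψ₁ (u x)) x *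
          deriv (deriv (deriv (fun x => Ψ₂ (u x) / Ψ₁ (u x)))) x
        = 3 * (deriv (deriv (fun x => Ψ₂ (u x) / Ψ₁ (u x))) x) ^ 2) := by
  set z : ℝ → ℝ := fun x => Ψ₂ (u x) / Ψ₁ (u x) with hz
  -- the Wronskian is constant
  have hWd : ∀ y : ℝ, HasDerivAt (fun y => deriv Ψ₂ y * Ψ₁ y - Ψ₂ y * deriv Ψ₁ y) 0 y := by
    intro y
    have h := ((hΨ₂2 y).hasDerivAt.mul (hΨ₁1 y).hasDerivAt).sub
      ((hΨ₂1 y).hasDerivAt.mul (hΨ₁2 y).hasDerivAt)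
    refine h.congr_deriv (Eq.symm ?_)
    rw [hairy₁, hairy₂]; ring
  obtain ⟨c, hW⟩ : ∃ c : ℝ, ∀ y : ℝ, deriv Ψ₂ y * Ψ₁ y - Ψ₂ y * deriv Ψ₁ y = c :=
    ⟨deriv Ψ₂ 0 * Ψ₁ 0 - Ψ₂ 0 * deriv Ψ₁ 0, fun y =>
      is_const_of_deriv_eq_zero (fun y => (hWd y).differentiableAt)
        (fun y => (hWd y).deriv) y 0⟩
  set g1 : ℝ → ℝ := fun x => c * deriv u x / (Ψ₁ (u x)) ^ 2 with hg1
  set g2 : ℝ → ℝ := fun x =>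
    c * (deriv (deriv u) x * Ψ₁ (u x) - 2 * (deriv u x) ^ 2 * deriv Ψ₁ (u x))
      / (Ψ₁ (u x)) ^ 3 with hg2
  set g3 : ℝ → ℝ := fun x =>
    c * ((deriv (deriv (deriv u)) x - u x * (deriv u x) ^ 3) * (Ψ₁ (u x)) ^ 2
        - 6 * deriv u x * deriv (deriv u) x * Ψ₁ (u x) * deriv Ψ₁ (u x)
        + 6 * (deriv u x) ^ 3 * (deriv Ψ₁ (u x)) ^ 2)
      / (Ψ₁ (u x)) ^ 4 with hg3
  -- basic composite derivatives
  have hΨ₁u : ∀ x ∈ Set.Ioo a b,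
      HasDerivAt (fun x => Ψ₁ (u x)) (deriv Ψ₁ (u x) * deriv u x) x := fun x hx =>
    (hΨ₁1 (u x)).hasDerivAt.comp x (hu1 x hx).hasDerivAt
  have hΨ₂u : ∀ x ∈ Set.Ioo a b,
      HasDerivAt (fun x => Ψ₂ (u x)) (deriv Ψ₂ (u x) * deriv u x) x := fun x hx =>
    (hΨ₂1 (u x)).hasDerivAt.comp x (hu1 x hx).hasDerivAt
  have hΨ₁'u : ∀ x ∈ Set.Ioo a b,
      HasDerivAt (fun x => deriv Ψ₁ (u x)) ((1 / 2) * u x * Ψ₁ (u x) * deriv u x) x := by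
    intro x hx
    have h := (hΨ₁2 (u x)).hasDerivAt.comp x (hu1 x hx).hasDerivAt
    rwa [hairy₁] at h
  -- first derivative
  have hz1 : ∀ x ∈ Set.Ioo a b, HasDerivAt z (g1 x) x := by
    intro x hx
    have h := (hΨ₂u x hx).div (hΨ₁u x hx) (hne x hx)
    refine h.congr_deriv (Eq.symm ?_)
    have hWx := hW (u x)
    have h1 := hne x hx
    rw [hg1]
    field_simp
    linear_combination (-deriv u x) * hWx
  have hz2 : ∀ x ∈ Set.Ioo a b, HasDerivAt g1 (g2 x) x := by
    intro x hx
    have hden : HasDerivAt (fun x => (Ψ₁ (u x)) ^ 2)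
        (2 * (Ψ₁ (u x)) ^ 1 * (deriv Ψ₁ (u x) * deriv u x)) x := by
      refine ((hΨ₁u x hx).pow 2).congr_deriv ?_; simp
    have hnum : HasDerivAt (fun x => c * deriv u x) (c * deriv (deriv u) x) x :=
      (hu2 x hx).hasDerivAt.const_mul c
    have h := hnum.div hden (pow_ne_zero 2 (hne x hx))
    refine h.congr_deriv (Eq.symm ?_)
    rw [hg2]
    have h1 := hne x hx
    field_simp
  have hz3 : ∀ x ∈ Set.Ioo a b, HasDerivAt g2 (g3 x) x := by
    intro x hx
    have hden : HasDerivAt (fun x => (Ψ₁ (u x)) ^ 3)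
        (3 * (Ψ₁ (u x)) ^ 2 * (deriv Ψ₁ (u x) * deriv u x)) x := by
      refine ((hΨ₁u x hx).pow 3).congr_deriv ?_; simp
    have hnum : HasDerivAt
        (fun x => c * (deriv (deriv u) x * Ψ₁ (u x) - 2 * (deriv u x) ^ 2 * deriv Ψ₁ (u x)))
        (c * ((deriv (deriv (deriv u)) x * Ψ₁ (u x)
            + deriv (deriv u) x * (deriv Ψ₁ (u x) * deriv u x))
          - (2 * (2 * (deriv u x) ^ 1 * deriv (deriv u) x) * deriv Ψ₁ (u x)
            + 2 * (deriv u x) ^ 2 * ((1 / 2) * u x * Ψ₁ (u x) * deriv u x)))) x := by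
      exact ((((hu3 x hx).hasDerivAt.mul (hΨ₁u x hx)).sub
        ((((hu2 x hx).hasDerivAt.pow 2).const_mul 2).mul (hΨ₁'u x hx))).const_mul c)
    have h := hnum.div hden (pow_ne_zero 3 (hne x hx))
    refine h.congr_deriv (Eq.symm ?_)
    rw [hg3]
    have h1 := hne x hx
    field_simp
    ring
  -- identify the iterated derivatives of z with g1, g2, g3 on the interval
  have hd1 : ∀ x ∈ Set.Ioo a b, deriv z x = g1 x := fun x hx => (hz1 x hx).deriv
  have hev1 : ∀ x ∈ Set.Ioo a b, deriv z =ᶠ[nhds x] g1 := fun x hx =>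
    Filter.eventuallyEq_of_mem (isOpen_Ioo.mem_nhds hx) hd1
  have hd2 : ∀ x ∈ Set.Ioo a b, deriv (deriv z) x = g2 x := fun x hx =>
    (hev1 x hx).deriv_eq.trans (hz2 x hx).deriv
  have hev2 : ∀ x ∈ Set.Ioo a b, deriv (deriv z) =ᶠ[nhds x] g2 := fun x hx =>
    Filter.eventuallyEq_of_mem (isOpen_Ioo.mem_nhds hx) hd2
  have hd3 : ∀ x ∈ Set.Ioo a b, deriv (deriv (deriv z)) x = g3 x := fun x hx =>
    (hev2 x hx).deriv_eq.trans (hz3 x hx).deriv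
  refine ⟨fun x hx => (hz1 x hx).differentiableAt,
    fun x hx => (hev1 x hx).differentiableAt_iff.mpr (hz2 x hx).differentiableAt,
    fun x hx => (hev2 x hx).differentiableAt_iff.mpr (hz3 x hx).differentiableAt,
    fun x hx => ?_⟩
  rw [hd1 x hx, hd2 x hx, hd3 x hx]
  simp only [hg1, hg2, hg3]
  have h1 := hne x hx
  have h2 := hode x hx
  field_simp
  linear_combination (c ^ 2 * Ψ₁ (u x) ^ 2) * h2
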